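/- Let P be a finite set with n elements and let A, B, C be pairwise disjoint subsets of P with |A| = α, |B| = β, |C| = γ. Consider the coalitional game v on P defined by v(Q) = 1 if Q ∩ A ≠ ∅, or both Q ∩ B ≠ ∅ and Q ∩ C ≠ ∅; and v(Q) = 0 otherwise. Then for every p ∈ A, φ(p,v) = 1/(α+β) + 1/(α+γ) − 1/(α+β+γ), and for every p ∈ P\(A ∪ B ∪ C), φ(p,v) = 0. -/

import Mathlib

open Finset

/-- The Shapley value of player `p` in the coalitional game with player set `P`
and characteristic function `v`. -/
noncomputable def shapley {α : Type*} [DecidableEq α] (P : Finset α) (v : Finset α → ℝ)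
    (p : α) : ℝ :=
  if hp : p ∈ P then
    (∑ π : {x // x ∈ P} ≃ Fin P.card,
      (v ((P.attach.filter fun q => π q ≤ π ⟨p, hp⟩).image Subtype.val) -
        v (((P.attach.filter fun q => π q ≤ π ⟨p, hp⟩).image Subtype.val).erase p))) /
      (P.card).factorial
  else 0

set_option maxHeartbeats 1000000

section Helpers
variable {α : Type*} [DecidableEq α]

private lemma card_filter_subtype (P T : Finset α) (hT : T ⊆ P) :
    (univ.filter fun s : {x // x ∈ P} => s.1 ∈ T).card = T.card := by
  classical
  apply Finset.card_bij (fun s _ => s.1)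
  · intro s hs; exact (mem_filter.mp hs).2
  · intro a _ b _ h; exact Subtype.ext h
  · intro q hq; exact ⟨⟨q, hT hq⟩, by simp [hq], rfl⟩

private lemma count_min (P T : Finset α) (hT : T ⊆ P) {p : α} (hp : p ∈ T) :
    (univ.filter fun π : {x // x ∈ P} ≃ Fin P.card =>
        ∀ r : {x // x ∈ P}, r.1 ∈ T → π ⟨p, hT hp⟩ ≤ π r).card * T.card
      = (P.card).factorial := by
  classical
  set pS : {x // x ∈ P} := ⟨p, hT hp⟩ with hpS
  set F := univ.filter fun s : {x // x ∈ P} => s.1 ∈ T with hF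
  -- counts are all equal
  have hcount : ∀ s : {x // x ∈ P}, s.1 ∈ T →
      (univ.filter fun π : {x // x ∈ P} ≃ Fin P.card =>
        ∀ r : {x // x ∈ P}, r.1 ∈ T → π s ≤ π r).card
      = (univ.filter fun π : {x // x ∈ P} ≃ Fin P.card =>
        ∀ r : {x // x ∈ P}, r.1 ∈ T → π pS ≤ π r).card := by
    intro s hs
    set σ := Equiv.swap pS s with hσ
    have hσT : ∀ r : {x // x ∈ P}, r.1 ∈ T → (σ r).1 ∈ T := by
      intro r hr
      rcases eq_or_ne r pS with rfl | h1
      · simpa [hσ, Equiv.swap_apply_left] using hs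
      rcases eq_or_ne r s with rfl | h2
      · simpa [hσ, Equiv.swap_apply_right] using hp
      · simpa [hσ, Equiv.swap_apply_of_ne_of_ne h1 h2] using hr
    have hσσ : ∀ r : {x // x ∈ P}, σ (σ r) = r := fun r => Equiv.swap_apply_self _ _ _
    apply Finset.card_bij' (fun π _ => σ.trans π) (fun π _ => σ.trans π)
    · intro π hπ
      simp only [mem_filter, mem_univ, true_and] at hπ ⊢
      intro r hr
      have := hπ (σ r) (hσT r hr)
      simpa [Equiv.trans_apply, hσ, Equiv.swap_apply_left] using this
    · intro π hπ
      simp only [mem_filter, mem_univ, true_and] at hπ ⊢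
      intro r hr
      have := hπ (σ r) (hσT r hr)
      simpa [Equiv.trans_apply, hσ, Equiv.swap_apply_right] using this
    · intro π _; ext x; simp [Equiv.trans_apply, hσσ]
    · intro π _; ext x; simp [Equiv.trans_apply, hσσ]
  -- exactly one minimizer per permutation
  have hone : ∀ π : {x // x ∈ P} ≃ Fin P.card,
      (F.filter fun s => ∀ r : {x // x ∈ P}, r.1 ∈ T → π s ≤ π r).card = 1 := by
    intro π
    rw [Finset.card_eq_one]
    obtain ⟨m, hm, hmin⟩ := Finset.exists_min_image F (fun s => π s)
      ⟨pS, by simp [hF, hpS, hp]⟩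
    refine ⟨m, ?_⟩
    ext s
    simp only [hF, mem_filter, mem_univ, true_and, mem_singleton]
    constructor
    · rintro ⟨hsT, hmin'⟩
      have h1 : π s ≤ π m := hmin' m (by simpa [hF] using hm)
      have h2 : π m ≤ π s := hmin s (by simp [hF, hsT])
      exact π.injective (le_antisymm h2 h1) ▸ rfl
    · rintro rfl
      exact ⟨by simpa [hF] using hm, fun r hr => hmin r (by simp [hF, hr])⟩
  have htotal : ∑ s ∈ F,
      (univ.filter fun π : {x // x ∈ P} ≃ Fin P.card =>
        ∀ r : {x // x ∈ P}, r.1 ∈ T → π s ≤ π r).card = (P.card).factorial := by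
    have : ∀ s : {x // x ∈ P},
        (univ.filter fun π : {x // x ∈ P} ≃ Fin P.card =>
          ∀ r : {x // x ∈ P}, r.1 ∈ T → π s ≤ π r).card
        = ∑ π : {x // x ∈ P} ≃ Fin P.card,
            (if ∀ r : {x // x ∈ P}, r.1 ∈ T → π s ≤ π r then 1 else 0) := by
      intro s; rw [Finset.card_filter]
    rw [Finset.sum_congr rfl (fun s _ => this s), Finset.sum_comm]
    have hcardΩ : Fintype.card ({x // x ∈ P} ≃ Fin P.card) = (P.card).factorial := by
      rw [Fintype.card_equiv (Fintype.equivFinOfCardEq (Fintype.card_coe P))]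
      simp [Fintype.card_coe]
    calc ∑ π : {x // x ∈ P} ≃ Fin P.card, ∑ s ∈ F,
            (if ∀ r : {x // x ∈ P}, r.1 ∈ T → π s ≤ π r then 1 else 0)
        = ∑ π : {x // x ∈ P} ≃ Fin P.card, 1 := by
          apply Finset.sum_congr rfl; intro π _
          rw [← Finset.card_filter]; exact hone π
      _ = (P.card).factorial := by simp [hcardΩ]
  rw [← htotal]
  rw [Finset.sum_congr rfl (fun s hs => hcount s (by simpa [hF] using hs))]
  rw [Finset.sum_const, card_filter_subtype P T hT, smul_eq_mul, mul_comm]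


private lemma erase_inter_nonempty (P : Finset α) (π : {x // x ∈ P} ≃ Fin P.card)
    {p : α} (hp : p ∈ P) (T : Finset α) :
    ((((P.attach.filter fun q => π q ≤ π ⟨p, hp⟩).image Subtype.val).erase p) ∩ T).Nonempty
      ↔ ¬ (∀ r : {x // x ∈ P}, r.1 ∈ T → π ⟨p, hp⟩ ≤ π r) := by
  classical
  constructor
  · rintro ⟨q, hq⟩
    simp only [mem_inter, mem_erase, mem_image, mem_filter, mem_attach, true_and] at hq
    obtain ⟨⟨hqp, r, hr, rfl⟩, hqT⟩ := hq
    intro h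
    have h1 : π ⟨p, hp⟩ ≤ π r := h r hqT
    have : r = ⟨p, hp⟩ := π.injective (le_antisymm hr h1)
    exact hqp (by rw [this])
  · intro h
    rw [not_forall] at h
    obtain ⟨r, hr⟩ := h
    rw [_root_.not_imp] at hr
    obtain ⟨hrT, hrle⟩ := hr
    refine ⟨r.1, ?_⟩
    simp only [mem_inter, mem_erase, mem_image, mem_filter, mem_attach, true_and]
    have hlt : π r < π ⟨p, hp⟩ := lt_of_not_ge hrle
    refine ⟨⟨?_, r, le_of_lt hlt, rfl⟩, hrT⟩
    intro h
    have : r = ⟨p, hp⟩ := Subtype.ext h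
    rw [this] at hlt; exact lt_irrefl _ hlt

private lemma ite_arith (X Y Z : Prop) [Decidable X] [Decidable Y] [Decidable Z] :
    (1 : ℝ) - (if (¬X ∨ (¬Y ∧ ¬Z)) then (1:ℝ) else 0) =
      (if X ∧ Y then (1:ℝ) else 0) + (if X ∧ Z then (1:ℝ) else 0)
        - (if (X ∧ Y) ∧ Z then (1:ℝ) else 0) := by
  by_cases hX : X <;> by_cases hY : Y <;> by_cases hZ : Z <;> simp [hX, hY, hZ]


end Helpers

/-- For the game in which a coalition is worth `1` exactly when it meets `A`, or
meets both `B` and `C` (with `A`, `B`, `C` pairwise disjoint subsets of `P`):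
each player of `A` has Shapley value `1/(α+β) + 1/(α+γ) − 1/(α+β+γ)`, and each
player outside `A ∪ B ∪ C` has Shapley value `0`. -/
theorem shapley_A_or_BC_game_on_A {α : Type*} [DecidableEq α] (P A B C : Finset α)
    (hA : A ⊆ P) (hB : B ⊆ P) (hC : C ⊆ P)
    (hAB : Disjoint A B) (hAC : Disjoint A C) (hBC : Disjoint B C) :
    (∀ p ∈ A,
        shapley P
          (fun Q => if (Q ∩ A).Nonempty ∨ ((Q ∩ B).Nonempty ∧ (Q ∩ C).Nonempty)
            then (1 : ℝ) else 0) p =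
          1 / ((A.card : ℝ) + (B.card : ℝ)) + 1 / ((A.card : ℝ) + (C.card : ℝ)) -
            1 / ((A.card : ℝ) + (B.card : ℝ) + (C.card : ℝ))) ∧
    (∀ p ∈ P, p ∉ A → p ∉ B → p ∉ C →
        shapley P
          (fun Q => if (Q ∩ A).Nonempty ∨ ((Q ∩ B).Nonempty ∧ (Q ∩ C).Nonempty)
            then (1 : ℝ) else 0) p = 0) := by
  classical
  constructor
  · intro p hp
    have hpP : p ∈ P := hA hp
    rw [shapley, dif_pos hpP]
    have hU : ∀ (T T' : Finset α) (π : {x // x ∈ P} ≃ Fin P.card),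
        (∀ r : {x // x ∈ P}, r.1 ∈ T ∪ T' → π ⟨p, hpP⟩ ≤ π r) ↔
        ((∀ r : {x // x ∈ P}, r.1 ∈ T → π ⟨p, hpP⟩ ≤ π r) ∧
         (∀ r : {x // x ∈ P}, r.1 ∈ T' → π ⟨p, hpP⟩ ≤ π r)) := by
      intro T T' π
      simp only [Finset.mem_union, or_imp, forall_and]
    have key : ∀ π : {x // x ∈ P} ≃ Fin P.card,
        ((if ((((P.attach.filter fun q => π q ≤ π ⟨p, hpP⟩).image Subtype.val)) ∩ A).Nonempty ∨
            (((((P.attach.filter fun q => π q ≤ π ⟨p, hpP⟩).image Subtype.val)) ∩ B).Nonempty ∧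
             ((((P.attach.filter fun q => π q ≤ π ⟨p, hpP⟩).image Subtype.val)) ∩ C).Nonempty)
          then (1 : ℝ) else 0) -
         (if (((((P.attach.filter fun q => π q ≤ π ⟨p, hpP⟩).image Subtype.val).erase p)) ∩ A).Nonempty ∨
            ((((((P.attach.filter fun q => π q ≤ π ⟨p, hpP⟩).image Subtype.val).erase p)) ∩ B).Nonempty ∧
             (((((P.attach.filter fun q => π q ≤ π ⟨p, hpP⟩).image Subtype.val).erase p)) ∩ C).Nonempty)
          then (1 : ℝ) else 0))
        = (if (∀ r : {x // x ∈ P}, r.1 ∈ A ∪ B → π ⟨p, hpP⟩ ≤ π r) then (1:ℝ) else 0)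
          + (if (∀ r : {x // x ∈ P}, r.1 ∈ A ∪ C → π ⟨p, hpP⟩ ≤ π r) then (1:ℝ) else 0)
          - (if (∀ r : {x // x ∈ P}, r.1 ∈ A ∪ B ∪ C → π ⟨p, hpP⟩ ≤ π r) then (1:ℝ) else 0) := by
      intro π
      have hpm : p ∈ (P.attach.filter fun q => π q ≤ π ⟨p, hpP⟩).image Subtype.val := by
        simp only [mem_image, mem_filter, mem_attach, true_and]
        exact ⟨⟨p, hpP⟩, le_refl _, rfl⟩
      rw [if_pos (Or.inl ⟨p, mem_inter.mpr ⟨hpm, hp⟩⟩)]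
      simp only [erase_inter_nonempty P π hpP, hU]
      exact ite_arith _ _ _
    rw [Finset.sum_congr rfl (fun π _ => key π)]
    rw [Finset.sum_sub_distrib, Finset.sum_add_distrib]
    rw [Finset.sum_boole, Finset.sum_boole, Finset.sum_boole]
    have hAB' : A ∪ B ⊆ P := Finset.union_subset hA hB
    have hAC' : A ∪ C ⊆ P := Finset.union_subset hA hC
    have hABC' : A ∪ B ∪ C ⊆ P := Finset.union_subset hAB' hC
    have e1 := count_min P (A ∪ B) hAB' (Finset.mem_union_left _ hp)
    have e2 := count_min P (A ∪ C) hAC' (Finset.mem_union_left _ hp)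
    have e3 := count_min P (A ∪ B ∪ C) hABC'
      (Finset.mem_union_left _ (Finset.mem_union_left _ hp))
    rw [Finset.card_union_of_disjoint hAB] at e1
    rw [Finset.card_union_of_disjoint hAC] at e2
    rw [Finset.card_union_of_disjoint (Finset.disjoint_union_left.mpr ⟨hAC, hBC⟩),
      Finset.card_union_of_disjoint hAB] at e3
    have hα : 0 < A.card := Finset.card_pos.mpr ⟨p, hp⟩
    have hx : ((A.card : ℝ) + B.card) ≠ 0 := by positivity
    have hy : ((A.card : ℝ) + C.card) ≠ 0 := by positivity
    have hz : ((A.card : ℝ) + B.card + C.card) ≠ 0 := by positivity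
    have hn : ((P.card.factorial : ℝ)) ≠ 0 := by positivity
    have f1 : ((univ.filter fun π : {x // x ∈ P} ≃ Fin P.card =>
        ∀ r : {x // x ∈ P}, r.1 ∈ A ∪ B → π ⟨p, hpP⟩ ≤ π r).card : ℝ)
        = (P.card.factorial : ℝ) / ((A.card : ℝ) + B.card) := by
      rw [eq_div_iff hx]; exact_mod_cast e1
    have f2 : ((univ.filter fun π : {x // x ∈ P} ≃ Fin P.card =>
        ∀ r : {x // x ∈ P}, r.1 ∈ A ∪ C → π ⟨p, hpP⟩ ≤ π r).card : ℝ)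
        = (P.card.factorial : ℝ) / ((A.card : ℝ) + C.card) := by
      rw [eq_div_iff hy]; exact_mod_cast e2
    have f3 : ((univ.filter fun π : {x // x ∈ P} ≃ Fin P.card =>
        ∀ r : {x // x ∈ P}, r.1 ∈ A ∪ B ∪ C → π ⟨p, hpP⟩ ≤ π r).card : ℝ)
        = (P.card.factorial : ℝ) / ((A.card : ℝ) + B.card + C.card) := by
      rw [eq_div_iff hz]; exact_mod_cast e3
    rw [f1, f2, f3]
    field_simp
  · intro p hpP hpA hpB hpC
    rw [shapley, dif_pos hpP]
    have key : ∀ π : {x // x ∈ P} ≃ Fin P.card, ∀ T : Finset α, p ∉ T →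
        ((((P.attach.filter fun q => π q ≤ π ⟨p, hpP⟩).image Subtype.val).erase p) ∩ T)
        = (((P.attach.filter fun q => π q ≤ π ⟨p, hpP⟩).image Subtype.val)) ∩ T := by
      intro π T hpT
      ext q
      simp only [mem_inter, mem_erase]
      constructor
      · rintro ⟨⟨_, hS⟩, hqT⟩; exact ⟨hS, hqT⟩
      · rintro ⟨hS, hqT⟩; exact ⟨⟨fun h => hpT (h ▸ hqT), hS⟩, hqT⟩
    have : ∀ π : {x // x ∈ P} ≃ Fin P.card,
        ((if ((((P.attach.filter fun q => π q ≤ π ⟨p, hpP⟩).image Subtype.val)) ∩ A).Nonempty ∨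
            (((((P.attach.filter fun q => π q ≤ π ⟨p, hpP⟩).image Subtype.val)) ∩ B).Nonempty ∧
             ((((P.attach.filter fun q => π q ≤ π ⟨p, hpP⟩).image Subtype.val)) ∩ C).Nonempty)
          then (1 : ℝ) else 0) -
         (if (((((P.attach.filter fun q => π q ≤ π ⟨p, hpP⟩).image Subtype.val).erase p)) ∩ A).Nonempty ∨
            ((((((P.attach.filter fun q => π q ≤ π ⟨p, hpP⟩).image Subtype.val).erase p)) ∩ B).Nonempty ∧
             (((((P.attach.filter fun q => π q ≤ π ⟨p, hpP⟩).image Subtype.val).erase p)) ∩ C).Nonempty)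
          then (1 : ℝ) else 0)) = 0 := by
      intro π
      rw [key π A hpA, key π B hpB, key π C hpC, sub_self]
    rw [Finset.sum_congr rfl (fun π _ => this π), Finset.sum_const, smul_zero, zero_div]
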